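/- Let U : ℝ → ℝ be continuously differentiable with U(0) = U(π) = U(2π) = 0. Then the function θ ↦ U(θ)·U′(θ)·cot(θ) (defined on (0, 2π) away from θ = π, where cot has poles at 0, π, 2π) is Lebesgue integrable on (0, 2π) and ∫₀^{2π} U(θ)·U′(θ)·cot(θ) dθ ≥ 0. -/

import Mathlib

open Real MeasureTheory

open Set intervalIntegral

/-- if `U` is `C¹` with `U 0 = U π = U (2π) = 0`, then `θ ↦ U θ * U' θ * cot θ`
is Lebesgue integrable on `(0, 2π)` and its integral is nonnegative. -/
theorem stmt_9 (U : ℝ → ℝ) (hUc1 : ContDiff ℝ 1 U)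
    (h0 : U 0 = 0) (hπ : U π = 0) (h2π : U (2 * π) = 0) :
    IntegrableOn (fun θ => U θ * deriv U θ * Real.cot θ) (Set.Ioo 0 (2 * π)) ∧
      0 ≤ ∫ θ in Set.Ioo 0 (2 * π), U θ * deriv U θ * Real.cot θ := by
  have hπpos : (0:ℝ) < π := Real.pi_pos
  have hU : Differentiable ℝ U := hUc1.differentiable one_ne_zero
  have hU'c : Continuous (deriv U) := hUc1.continuous_deriv le_rfl
  have hUcont : Continuous U := hUc1.continuous
  obtain ⟨M, hM⟩ := (isCompact_Icc (a := (0:ℝ)) (b := 2*π)).exists_bound_of_continuousOn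
    hU'c.continuousOn
  have hM0 : 0 ≤ M := le_trans (norm_nonneg _) (hM 0 ⟨le_rfl, by positivity⟩)
  set C := M * (π/2) with hC
  have hC0 : 0 ≤ C := by positivity
  -- Mean value theorem bound
  have mvt : ∀ z ∈ Icc (0:ℝ) (2*π), ∀ θ ∈ Icc (0:ℝ) (2*π), U z = 0 →
      |U θ| ≤ M * |θ - z| := by
    intro z hz θ hθ hz0
    have := (convex_Icc (0:ℝ) (2*π)).norm_image_sub_le_of_norm_deriv_le
      (fun x _ => hU x) (fun x hx => hM x hx) hz hθ
    simpa [hz0, Real.norm_eq_abs] using this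
  -- key bound : |U θ| ≤ C * |sin θ| on [0, 2π]
  have key : ∀ θ ∈ Icc (0:ℝ) (2*π), |U θ| ≤ C * |Real.sin θ| := by
    intro θ hθ
    have step : ∀ z ∈ Icc (0:ℝ) (2*π), U z = 0 → |θ - z| ≤ π/2 →
        |Real.sin (θ - z)| = |Real.sin θ| → |U θ| ≤ C * |Real.sin θ| := by
      intro z hz hz0 hdist hsin
      have h1 := mvt z hz θ hθ hz0
      have h2 : 2/π * |θ - z| ≤ |Real.sin (θ - z)| := Real.mul_abs_le_abs_sin hdist
      rw [hsin] at h2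
      have h3 := mul_le_mul_of_nonneg_left h2
        (mul_nonneg hM0 (by positivity : (0:ℝ) ≤ π/2))
      have h4 : M * (π/2) * (2/π * |θ - z|) = M * |θ - z| := by
        field_simp
      rw [h4] at h3
      rw [hC]
      linarith
    rcases le_or_gt θ (π/2) with hcase | hcase
    · refine step 0 ⟨le_rfl, by positivity⟩ h0 ?_ (by rw [sub_zero])
      rw [sub_zero, abs_of_nonneg hθ.1]; exact hcase
    · rcases le_or_gt θ (3*π/2) with hcase' | hcase'
      · refine step π ⟨hπpos.le, by linarith⟩ hπ ?_ ?_
        · rw [abs_le]; constructor <;> linarith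
        · rw [Real.sin_sub_pi, abs_neg]
      · refine step (2*π) ⟨by positivity, le_rfl⟩ h2π ?_ ?_
        · rw [abs_le]; constructor
          · linarith
          · linarith [hθ.2]
        · rw [Real.sin_sub_two_pi]
  -- zeros of sin in [0, 2π] are zeros of U
  have sin_zero_cases : ∀ θ ∈ Icc (0:ℝ) (2*π), Real.sin θ = 0 → U θ = 0 := by
    intro θ hθ hs
    rw [Real.sin_eq_zero_iff] at hs
    obtain ⟨n, hn⟩ := hs
    have hn0 : (0:ℤ) ≤ n := by
      by_contra hneg
      push_neg at hneg
      have h1' : n ≤ -1 := by omega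
      have h1 : (n:ℝ) ≤ -1 := by exact_mod_cast h1'
      nlinarith [hθ.1]
    have hn2 : n ≤ 2 := by
      by_contra hgt
      push_neg at hgt
      have h1 : (3:ℝ) ≤ (n:ℝ) := by exact_mod_cast hgt
      nlinarith [hθ.2]
    interval_cases n
    · rw [← hn]; simpa using h0
    · rw [← hn]; simpa using hπ
    · rw [← hn]; push_cast; simpa using h2π
  set f := fun θ => U θ * deriv U θ * Real.cot θ with hf
  set h := fun θ => U θ ^ 2 / Real.sin θ ^ 2 / 2 with hh
  set g := fun θ => U θ ^ 2 * (Real.cos θ / Real.sin θ) / 2 with hg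
  have hhnn : ∀ x, 0 ≤ h x := by
    intro x; rw [hh]; positivity
  -- derivative of g
  have hgderiv : ∀ θ, Real.sin θ ≠ 0 → HasDerivAt g (f θ - h θ) θ := by
    intro θ hs
    have d1 : HasDerivAt (fun x => U x ^ 2) (2 * U θ * deriv U θ) θ := by
      have := ((hU θ).hasDerivAt).fun_pow 2
      simpa [mul_comm, mul_assoc, mul_left_comm] using this
    have d2 : HasDerivAt (fun x => Real.cos x / Real.sin x)
        ((-Real.sin θ * Real.sin θ - Real.cos θ * Real.cos θ) / Real.sin θ ^ 2) θ :=
      (Real.hasDerivAt_cos θ).div (Real.hasDerivAt_sin θ) hs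
    have d3 := (d1.fun_mul d2).div_const 2
    refine d3.congr_deriv (Eq.symm ?_)
    rw [hf, hh]
    simp only
    rw [Real.cot_eq_cos_div_sin]
    have hpyth := Real.sin_sq_add_cos_sq θ
    field_simp
    linear_combination (U θ ^ 2) * hpyth
  -- measurability
  have hmeas_f : Measurable f := by
    have hcot : Measurable Real.cot := by
      have hco : Real.cot = fun x => Real.cos x / Real.sin x :=
        funext fun x => Real.cot_eq_cos_div_sin x
      rw [hco]; exact Real.measurable_cos.div Real.measurable_sin
    exact (hUcont.measurable.mul hU'c.measurable).mul hcot
  have hmeas_h : Measurable h :=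
    ((hUcont.measurable.pow_const 2).div ((Real.measurable_sin).pow_const 2)).div_const 2
  -- bounds
  have hbound_f : ∀ θ ∈ Icc (0:ℝ) (2*π), |f θ| ≤ C * M := by
    intro θ hθ
    by_cases hs : Real.sin θ = 0
    · have hc : Real.cot θ = 0 := by rw [Real.cot_eq_cos_div_sin, hs, div_zero]
      rw [hf]; simp only [hc, mul_zero, abs_zero]; positivity
    · have h1 := key θ hθ
      have hsin : 0 < |Real.sin θ| := abs_pos.2 hs
      have hU'b : |deriv U θ| ≤ M := by simpa [Real.norm_eq_abs] using hM θ hθ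
      have hcos : |Real.cos θ| ≤ 1 := Real.abs_cos_le_one θ
      have e : |f θ| = |U θ| * |deriv U θ| * |Real.cos θ| / |Real.sin θ| := by
        rw [hf]; simp only
        rw [Real.cot_eq_cos_div_sin, abs_mul, abs_mul, abs_div, mul_div_assoc]
      rw [e, div_le_iff₀ hsin]
      have e1 : |U θ| * |deriv U θ| ≤ C * |Real.sin θ| * M :=
        mul_le_mul h1 hU'b (abs_nonneg _) (by positivity)
      have e2 : |U θ| * |deriv U θ| * |Real.cos θ| ≤ C * |Real.sin θ| * M * 1 :=
        mul_le_mul e1 hcos (abs_nonneg _) (by positivity)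
      calc |U θ| * |deriv U θ| * |Real.cos θ| ≤ C * |Real.sin θ| * M * 1 := e2
        _ = C * M * |Real.sin θ| := by ring
  have hbound_h : ∀ θ ∈ Icc (0:ℝ) (2*π), |h θ| ≤ C^2 / 2 := by
    intro θ hθ
    rw [abs_of_nonneg (hhnn θ)]
    by_cases hs : Real.sin θ = 0
    · rw [hh]; simp only [hs]
      norm_num
      positivity
    · have h1 := key θ hθ
      have hs2 : 0 < Real.sin θ ^ 2 := by positivity
      have hUsq : U θ ^ 2 ≤ C ^ 2 * Real.sin θ ^ 2 := by
        nlinarith [h1, abs_nonneg (U θ), abs_nonneg (Real.sin θ), sq_abs (U θ),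
          sq_abs (Real.sin θ)]
      rw [hh]; simp only
      have hstep : U θ ^ 2 / Real.sin θ ^ 2 ≤ C ^ 2 := by
        rw [div_le_iff₀ hs2]; nlinarith [hUsq]
      linarith
  -- integrability on Ioo 0 (2π)
  have hvol : volume (Ioo (0:ℝ) (2*π)) ≠ ⊤ := by
    rw [Real.volume_Ioo]; exact ENNReal.ofReal_ne_top
  have hint_f : IntegrableOn f (Ioo 0 (2*π)) := by
    apply Measure.integrableOn_of_bounded hvol hmeas_f.aestronglyMeasurable (M := C * M)
    refine (ae_restrict_iff' measurableSet_Ioo).2 (ae_of_all _ fun θ hθ => ?_)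
    simpa [Real.norm_eq_abs] using hbound_f θ (Ioo_subset_Icc_self hθ)
  have hint_h : IntegrableOn h (Ioo 0 (2*π)) := by
    apply Measure.integrableOn_of_bounded hvol hmeas_h.aestronglyMeasurable (M := C^2/2)
    refine (ae_restrict_iff' measurableSet_Ioo).2 (ae_of_all _ fun θ hθ => ?_)
    simpa [Real.norm_eq_abs] using hbound_h θ (Ioo_subset_Icc_self hθ)
  have hsub1 : Ioo (0:ℝ) π ⊆ Ioo 0 (2*π) := Ioo_subset_Ioo le_rfl (by linarith)
  have hsub2 : Ioo π (2*π) ⊆ Ioo 0 (2*π) := Ioo_subset_Ioo hπpos.le le_rfl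
  have hif1 : IntervalIntegrable f volume 0 π := by
    rw [intervalIntegrable_iff_integrableOn_Ioo_of_le hπpos.le]
    exact hint_f.mono_set hsub1
  have hif2 : IntervalIntegrable f volume π (2*π) := by
    rw [intervalIntegrable_iff_integrableOn_Ioo_of_le (by linarith)]
    exact hint_f.mono_set hsub2
  have hih1 : IntervalIntegrable h volume 0 π := by
    rw [intervalIntegrable_iff_integrableOn_Ioo_of_le hπpos.le]
    exact hint_h.mono_set hsub1
  have hih2 : IntervalIntegrable h volume π (2*π) := by
    rw [intervalIntegrable_iff_integrableOn_Ioo_of_le (by linarith)]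
    exact hint_h.mono_set hsub2
  have hig1 : IntervalIntegrable (fun x => f x - h x) volume 0 π := hif1.sub hih1
  have hig2 : IntervalIntegrable (fun x => f x - h x) volume π (2*π) := hif2.sub hih2
  -- continuity of g on [0, 2π]
  have hgbound : ∀ θ ∈ Icc (0:ℝ) (2*π), |g θ| ≤ C/2 * |U θ| := by
    intro θ hθ
    by_cases hs : Real.sin θ = 0
    · have : g θ = 0 := by rw [hg]; simp [hs]
      rw [this, abs_zero]; positivity
    · have h1 := key θ hθ
      have hsin : 0 < |Real.sin θ| := abs_pos.2 hs
      have hcos : |Real.cos θ| ≤ 1 := Real.abs_cos_le_one θ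
      have e : |g θ| = U θ ^ 2 * |Real.cos θ| / |Real.sin θ| / 2 := by
        rw [hg]; simp only
        rw [abs_div, abs_mul, abs_div, abs_pow, sq_abs, mul_div_assoc]
        norm_num
        ring
      rw [e]
      rw [div_le_iff₀ (by norm_num : (0:ℝ) < 2), div_le_iff₀ hsin]
      nlinarith [mul_le_mul_of_nonneg_right h1 (abs_nonneg (U θ)), hcos,
        sq_abs (U θ), abs_nonneg (U θ), abs_nonneg (Real.cos θ),
        mul_nonneg (abs_nonneg (U θ)) (abs_nonneg (U θ)), sq_nonneg (U θ)]
  have hcontg : ContinuousOn g (Icc 0 (2*π)) := by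
    intro θ hθ
    by_cases hs : Real.sin θ = 0
    · have hUθ : U θ = 0 := sin_zero_cases θ hθ hs
      have hgθ : g θ = 0 := by rw [hg]; simp [hUθ]
      rw [ContinuousWithinAt, hgθ]
      apply squeeze_zero_norm' (a := fun x => C/2 * |U x|)
      · filter_upwards [self_mem_nhdsWithin] with x hx
        simpa [Real.norm_eq_abs] using hgbound x hx
      · have htend : ContinuousWithinAt (fun x => C/2 * |U x|) (Icc 0 (2*π)) θ :=
          (continuous_const.mul hUcont.abs).continuousWithinAt
        simpa [hUθ] using htend.tendsto
    · have : ContinuousAt g θ := by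
        apply ContinuousAt.div_const
        exact (hUcont.continuousAt.pow 2).mul
          (Real.continuous_cos.continuousAt.div Real.continuous_sin.continuousAt hs)
      exact this.continuousWithinAt
  -- FTC on the two halves
  have hderiv1 : ∀ x ∈ Ioo (0:ℝ) π, HasDerivAt g (f x - h x) x := fun x hx =>
    hgderiv x (ne_of_gt (Real.sin_pos_of_pos_of_lt_pi hx.1 hx.2))
  have hderiv2 : ∀ x ∈ Ioo π (2*π), HasDerivAt g (f x - h x) x := by
    intro x hx
    apply hgderiv x
    have h1 : 0 < Real.sin (x - π) :=
      Real.sin_pos_of_pos_of_lt_pi (by linarith [hx.1]) (by linarith [hx.2])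
    rw [Real.sin_sub_pi] at h1
    exact ne_of_lt (by linarith)
  have ftc1 : ∫ x in (0:ℝ)..π, (f x - h x) = g π - g 0 :=
    intervalIntegral.integral_eq_sub_of_hasDerivAt_of_le hπpos.le
      (hcontg.mono (Icc_subset_Icc le_rfl (by linarith))) hderiv1 hig1
  have ftc2 : ∫ x in π..(2*π), (f x - h x) = g (2*π) - g π :=
    intervalIntegral.integral_eq_sub_of_hasDerivAt_of_le (by linarith)
      (hcontg.mono (Icc_subset_Icc hπpos.le le_rfl)) hderiv2 hig2
  have hg0 : g 0 = 0 := by rw [hg]; simp [h0]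
  have hgπ : g π = 0 := by rw [hg]; simp [hπ]
  have hg2π : g (2*π) = 0 := by rw [hg]; simp [h2π]
  have hfeq : f = fun x => (f x - h x) + h x := by funext x; ring
  have pos1 : 0 ≤ ∫ x in (0:ℝ)..π, f x := by
    rw [hfeq, intervalIntegral.integral_add hig1 hih1, ftc1, hgπ, hg0]
    have := intervalIntegral.integral_nonneg (μ := volume) (f := h) hπpos.le
      (fun x _ => hhnn x)
    simpa using this
  have pos2 : 0 ≤ ∫ x in π..(2*π), f x := by
    rw [hfeq, intervalIntegral.integral_add hig2 hih2, ftc2, hg2π, hgπ]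
    have := intervalIntegral.integral_nonneg (μ := volume) (f := h)
      (by linarith : π ≤ 2*π) (fun x _ => hhnn x)
    simpa using this
  have heq : ∫ θ in Ioo (0:ℝ) (2*π), f θ
      = (∫ x in (0:ℝ)..π, f x) + ∫ x in π..(2*π), f x := by
    rw [intervalIntegral.integral_add_adjacent_intervals hif1 hif2,
      intervalIntegral.integral_of_le (by linarith), MeasureTheory.integral_Ioc_eq_integral_Ioo]
  exact ⟨hint_f, by rw [heq]; linarith⟩
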